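/- Let R be a commutative ring in which 2 is invertible, let ε ∈ R satisfy ε² = 1, and let M, A, B, C be n×n matrices over R satisfying Bᵀ·M = Mᵀ·Aᵀ and Bᵀ − ε·A = Mᵀ·C. Then the matrix A′ := A + (ε/2)·Mᵀ·C satisfies (A′·M)ᵀ = ε·(A′·M); that is, A′·M is ε-symmetric. -/
import Mathlib


open Matrix

/-- The symmetrization step in the proof of Theorem B: if `Bᵀ M = Mᵀ Aᵀ` and
`Bᵀ - ε A = Mᵀ C`, then `A' := A + (ε/2) Mᵀ C` makes `A' M` ε-symmetric. -/
theorem symmetrization_step (R : Type*) [CommRing R] [Invertible (2 : R)]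
    (ε : R) (hε : ε ^ 2 = 1) (n : ℕ) (M A B C : Matrix (Fin n) (Fin n) R)
    (h1 : Bᵀ * M = Mᵀ * Aᵀ) (h2 : Bᵀ - ε • A = Mᵀ * C) :
    ((A + (ε * ⅟(2 : R)) • (Mᵀ * C)) * M)ᵀ
      = ε • ((A + (ε * ⅟(2 : R)) • (Mᵀ * C)) * M) := by
  have h1' : Mᵀ * B = A * M := by
    have := congrArg Matrix.transpose h1
    simpa [Matrix.transpose_mul] using this
  have h2' : B - ε • Aᵀ = Cᵀ * M := by
    have := congrArg Matrix.transpose h2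
    simpa [Matrix.transpose_sub, Matrix.transpose_mul, Matrix.transpose_smul] using this
  have hB : Bᵀ = ε • A + Mᵀ * C := by
    rw [← h2]; abel
  have hBM : Bᵀ * M = ε • (A * M) + Mᵀ * C * M := by
    rw [hB, add_mul, smul_mul_assoc]
  -- key identity: Mᵀ Cᵀ M = -ε • (Mᵀ C M)
  have hkey : Mᵀ * (Cᵀ * M) = -(ε • (Mᵀ * C * M)) := by
    have e1 : Mᵀ * (Cᵀ * M) = A * M - ε • (Bᵀ * M) := by
      rw [← h2', Matrix.mul_sub, Matrix.mul_smul, h1', h1]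
    rw [e1, hBM, smul_add, smul_smul, ← pow_two, hε, one_smul]
    abel
  calc ((A + (ε * ⅟(2 : R)) • (Mᵀ * C)) * M)ᵀ
      = (A * M)ᵀ + (ε * ⅟(2 : R)) • (Mᵀ * (Cᵀ * M)) := by
        rw [add_mul, Matrix.transpose_add, smul_mul_assoc, Matrix.transpose_smul]
        simp [Matrix.transpose_mul, Matrix.mul_assoc]
    _ = ε • (A * M) + Mᵀ * C * M + (ε * ⅟(2 : R)) • -(ε • (Mᵀ * C * M)) := by
        rw [Matrix.transpose_mul, ← h1, hBM, hkey]
    _ = ε • ((A + (ε * ⅟(2 : R)) • (Mᵀ * C)) * M) := by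
        rw [add_mul, smul_mul_assoc, smul_add]
        rw [smul_neg, smul_smul, smul_smul]
        have c1 : ε * ⅟(2 : R) * ε = ⅟(2 : R) := by
          have : ε * ⅟(2 : R) * ε = ε ^ 2 * ⅟(2 : R) := by ring
          rw [this, hε, one_mul]
        have c2 : ε * (ε * ⅟(2 : R)) = ⅟(2 : R) := by
          have : ε * (ε * ⅟(2 : R)) = ε ^ 2 * ⅟(2 : R) := by ring
          rw [this, hε, one_mul]
        rw [c1, c2]
        have h12 : (1 : R) - ⅟(2 : R) = ⅟(2 : R) := by
          have h := mul_invOf_self (2 : R)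
          linear_combination -h
        have key2 : Mᵀ * C * M + -(⅟(2 : R) • (Mᵀ * C * M)) = ⅟(2 : R) • (Mᵀ * C * M) := by
          rw [← sub_eq_add_neg]
          nth_rewrite 1 [← one_smul R (Mᵀ * C * M)]
          rw [← sub_smul, h12]
        rw [add_assoc, key2]
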